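/- Let n ≥ 2 and β = (β_1, …, β_{n−1}) ∈ {0,1}^{n−1}. Define the 2n-qubit vector v(β) on registers A_1, …, A_n, B_1, …, B_n as follows: place |GHZ_{n+1}⟩ on registers A_1, B_1, …, B_n, place |β_i⟩ on register A_{i+1} for i = 1, …, n−1, then apply CNOT_n to registers A_1 … A_n and X^{β_i} to register B_{i+1} for each i. Then v(β) = 2^{−(n−1)/2} Σ_{z ∈ {0,1}^{n−1}} (−1)^{β·z} |Φ^{z',0}⟩_{A_1 B_1} ⊗ ⊗_{i=1}^{n−1} |Φ^{z_i,0}⟩_{A_{i+1} B_{i+1}}, where z' = z_1 ⊕ z_2 ⊕ … ⊕ z_{n−1} and β·z = Σ_i β_i z_i. -/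

import Mathlib

set_option maxHeartbeats 1000000


open Matrix

/-- Basis labels for registers `A_1, …, A_n, B_1, …, B_n` (`n = n' + 2`):
a pair `(a, b)` of bitstrings for the `A` and `B` registers. -/
abbrev PairBasis (n : ℕ) : Type := (Fin n → Fin 2) × (Fin n → Fin 2)

/-- Amplitude of the GHZ state `|GHZ_{n+1}⟩` on registers `A_1, B_1, …, B_n`. -/
noncomputable def ghzA1B (n : ℕ) : Fin 2 × (Fin (n + 2) → Fin 2) → ℂ := fun u =>
  ((if u.1 = 0 ∧ u.2 = fun _ => 0 then 1 else 0) +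
      (if u.1 = 1 ∧ u.2 = fun _ => 1 then 1 else 0)) / (Real.sqrt 2 : ℂ)

/-- Amplitude of the Bell basis state `|Φ^{z,x}⟩ = (Z^z X^x ⊗ I)|Φ⟩` at `(u, v)`:
nonzero iff `u = v + x`, with phase `(-1)^{z·u}` and magnitude `1/√2`. -/
noncomputable def bellBasisAmp (z x : Fin 2) (u v : Fin 2) : ℂ :=
  if u = v + x then (-1) ^ (z.val * u.val) * ((Real.sqrt 2 : ℂ))⁻¹ else 0

/-- `CNOT_n ⊗ I_B`: `|0⟩⟨0| ⊗ I^{⊗(n-1)} + |1⟩⟨1| ⊗ X^{⊗(n-1)}` on the `A`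
registers (control `A_1`), identity on the `B` registers. -/
noncomputable def cnotA (n : ℕ) : Matrix (PairBasis (n + 2)) (PairBasis (n + 2)) ℂ :=
  Matrix.of fun p q =>
    if p.2 = q.2 ∧ p.1 0 = q.1 0 ∧ (∀ i, i ≠ 0 → p.1 i = q.1 i + q.1 0)
    then (1 : ℂ) else 0

/-- The correction operator `⊗_{i=1}^{n-1} X^{β_i}_{B_{i+1}}` (identity on `B_1`
and on all `A` registers). -/
noncomputable def xCorrB (n : ℕ) (β : Fin (n + 1) → Fin 2) :
    Matrix (PairBasis (n + 2)) (PairBasis (n + 2)) ℂ :=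
  Matrix.of fun p q =>
    if p.1 = q.1 ∧ (∀ j, p.2 j = q.2 j + (Fin.cons 0 β : Fin (n + 2) → Fin 2) j)
    then (1 : ℂ) else 0

/-- The state `|GHZ_{n+1}⟩_{A_1 B_1 ⋯ B_n} ⊗ (⊗_i |β_i⟩_{A_{i+1}})`. -/
noncomputable def initState (n : ℕ) (β : Fin (n + 1) → Fin 2) : PairBasis (n + 2) → ℂ :=
  fun p => ghzA1B n (p.1 0, p.2) * ∏ i : Fin (n + 1), (if p.1 i.succ = β i then (1 : ℂ) else 0)

/-- The vector `v(β)`: apply `CNOT_n` on the `A` registers and `X^{β_i}` on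
`B_{i+1}` to the state `initState n β`. -/
noncomputable def vBeta (n : ℕ) (β : Fin (n + 1) → Fin 2) : PairBasis (n + 2) → ℂ :=
  (xCorrB n β * cnotA n).mulVec (initState n β)

lemma fin2_add_add (a b : Fin 2) : a + b + b = a := by revert a b; decide
lemma fin2_add_eq_zero (a b : Fin 2) : a + b = 0 ↔ a = b := by revert a b; decide
lemma fin2_add_one (a b : Fin 2) : a + 1 = b ↔ a = b + 1 := by revert a b; decide
lemma fin2_add_eq_one (a b : Fin 2) : a + b = 1 ↔ a = b + 1 := by revert a b; decide
lemma fin2_cases (x : Fin 2) : x = 0 ∨ x = 1 := by revert x; decide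

lemma neg_one_pow_fin2_add (x y : Fin 2) (a : ℕ) :
    ((-1:ℂ)) ^ ((x + y).val * a) = (-1) ^ (x.val * a) * (-1) ^ (y.val * a) := by
  fin_cases x <;> fin_cases y <;> simp [← pow_add, ← two_mul, pow_mul]

lemma neg_one_pow_sum_val {ι : Type*} (s : Finset ι) (z : ι → Fin 2) (a : ℕ) :
    ((-1:ℂ)) ^ ((∑ i ∈ s, z i).val * a) = ∏ i ∈ s, (-1) ^ ((z i).val * a) := by
  classical
  induction s using Finset.induction with
  | empty => simp
  | insert _ _ h ih => rw [Finset.sum_insert h, Finset.prod_insert h, neg_one_pow_fin2_add, ih]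

lemma key_sum (b a u v : Fin 2) :
    ∑ x : Fin 2, ((-1:ℂ)) ^ (b.val * x.val) * (-1) ^ (x.val * a.val) *
        (if u = v then (-1) ^ (x.val * u.val) * ((Real.sqrt 2 : ℂ))⁻¹ else 0)
      = if u = v ∧ u = b + a then 2 * ((Real.sqrt 2 : ℂ))⁻¹ else 0 := by
  fin_cases b <;> fin_cases a <;> fin_cases u <;> fin_cases v <;>
    simp [Fin.sum_univ_two] <;> ring

lemma sqrt2_fact : ((Real.sqrt 2:ℂ))⁻¹ * (2 * ((Real.sqrt 2:ℂ))⁻¹) = 1 := by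
  have h : (Real.sqrt 2 : ℂ) * (Real.sqrt 2 : ℂ) = 2 := by
    rw [← Complex.ofReal_mul, Real.mul_self_sqrt (by norm_num)]; norm_num
  have hne : (Real.sqrt 2 : ℂ) ≠ 0 := by
    intro h0; rw [h0] at h; simp at h
  rw [show ((Real.sqrt 2:ℂ))⁻¹ * (2 * ((Real.sqrt 2:ℂ))⁻¹) = 2 / ((Real.sqrt 2:ℂ) * (Real.sqrt 2:ℂ)) from by field_simp, h]
  norm_num

lemma forall_fin_succ' {m : ℕ} {P : Fin (m+1) → Prop} :
    (∀ j, P j) ↔ P 0 ∧ ∀ i : Fin m, P i.succ :=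
  ⟨fun h => ⟨h 0, fun i => h i.succ⟩, fun h j => Fin.cases h.1 h.2 j⟩

lemma boole_helper (c1 c2 c3 : Prop) [Decidable c1] [Decidable c2] [Decidable c3]
    (h : c1 ∧ c2 ↔ c3) (s : ℂ) :
    (if c1 then (1:ℂ) else 0)/s * (if c2 then 1 else 0) = s⁻¹ * (if c3 then 1 else 0) := by
  rw [div_eq_mul_inv]
  by_cases h1 : c1 <;> by_cases h2 : c2 <;> simp [h1, h2, ← h, mul_comm]

/-- **Bell-basis decomposition of `v(β)` (key lemma for Theorem 6).**
`v(β) = 2^{-(n-1)/2} ∑_{z ∈ {0,1}^{n-1}} (-1)^{β·z}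
  |Φ^{z',0}⟩_{A_1 B_1} ⊗ ⊗_{i=1}^{n-1} |Φ^{z_i,0}⟩_{A_{i+1} B_{i+1}}`,
where `z' = z₁ ⊕ ⋯ ⊕ z_{n-1}` and `β·z = ∑ i β_i z_i`. -/
theorem vBeta_bell_decomposition (n : ℕ) (β : Fin (n + 1) → Fin 2) :
    vBeta n β
      = fun p : PairBasis (n + 2) =>
          ((Real.sqrt 2 : ℂ))⁻¹ ^ (n + 1) *
            ∑ z : Fin (n + 1) → Fin 2,
              (-1 : ℂ) ^ (∑ i, (β i).val * (z i).val) *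
                (bellBasisAmp (∑ i, z i) 0 (p.1 0) (p.2 0) *
                  ∏ i : Fin (n + 1), bellBasisAmp (z i) 0 (p.1 i.succ) (p.2 i.succ)) := by
  classical
  funext p
  obtain ⟨pa, pb⟩ := p
  set T : ℂ := ((Real.sqrt 2 : ℂ))⁻¹ *
      ((if pa 0 = pb 0 ∧ ∀ i : Fin (n+1),
          pa i.succ = pb i.succ ∧ pa i.succ = β i + pa 0 then (1:ℂ) else 0)) with hT
  have hLHS : vBeta n β (pa, pb) = T := by
    have hx : ∀ q : PairBasis (n+2), xCorrB n β (pa, pb) q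
        = if q = (pa, fun j => pb j + (Fin.cons 0 β : Fin (n+2) → Fin 2) j) then 1 else 0 := by
      intro q
      simp only [xCorrB, Matrix.of_apply]
      refine if_congr ?_ rfl rfl
      rw [Prod.ext_iff]
      simp only [funext_iff]
      constructor
      · rintro ⟨h1, h2⟩
        exact ⟨fun j => (h1 j).symm, fun j => by rw [h2 j]; exact (fin2_add_add _ _).symm⟩
      · rintro ⟨h1, h2⟩
        exact ⟨fun j => (h1 j).symm, fun j => by rw [h2 j]; exact (fin2_add_add _ _).symm⟩
    have step1 : vBeta n β (pa, pb)
        = (cnotA n).mulVec (initState n β)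
            (pa, fun j => pb j + (Fin.cons 0 β : Fin (n+2) → Fin 2) j) := by
      rw [vBeta, ← Matrix.mulVec_mulVec]
      simp only [Matrix.mulVec, dotProduct, hx, ite_mul, one_mul, zero_mul,
        Finset.sum_ite_eq', Finset.mem_univ, if_true]
    have hcn : ∀ r : PairBasis (n+2),
        cnotA n (pa, fun j => pb j + (Fin.cons 0 β : Fin (n+2) → Fin 2) j) r
        = if r = ((Fin.cons (pa 0) (fun i : Fin (n+1) => pa i.succ + pa 0) : Fin (n+2) → Fin 2),
            fun j => pb j + (Fin.cons 0 β : Fin (n+2) → Fin 2) j) then 1 else 0 := by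
      intro r
      simp only [cnotA, Matrix.of_apply]
      refine if_congr ?_ rfl rfl
      rw [Prod.ext_iff]
      simp only [funext_iff]
      constructor
      · rintro ⟨h1, h2, h3⟩
        refine ⟨fun i => ?_, fun j => (h1 j).symm⟩
        induction i using Fin.cases with
        | zero => rw [Fin.cons_zero]; exact h2.symm
        | succ j =>
          rw [Fin.cons_succ, h3 j.succ (Fin.succ_ne_zero j), h2]
          exact ((fin2_add_add _ _).symm)
      · rintro ⟨h1, h2⟩
        refine ⟨fun j => (h2 j).symm, ?_, ?_⟩
        · rw [h1 0, Fin.cons_zero]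
        · intro i hi
          induction i using Fin.cases with
          | zero => exact absurd rfl hi
          | succ j =>
            rw [h1 j.succ, Fin.cons_succ, h1 0, Fin.cons_zero]
            exact (fin2_add_add _ _).symm
    have step2 : (cnotA n).mulVec (initState n β)
            (pa, fun j => pb j + (Fin.cons 0 β : Fin (n+2) → Fin 2) j)
        = initState n β
            ((Fin.cons (pa 0) (fun i : Fin (n+1) => pa i.succ + pa 0) : Fin (n+2) → Fin 2),
              fun j => pb j + (Fin.cons 0 β : Fin (n+2) → Fin 2) j) := by
      simp only [Matrix.mulVec, dotProduct, hcn, ite_mul, one_mul, zero_mul,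
        Finset.sum_ite_eq', Finset.mem_univ, if_true]
    rw [step1, step2, hT]
    simp only [initState, ghzA1B, Fin.cons_zero, Fin.cons_succ]
    rw [Finset.prod_boole]
    simp only [Finset.mem_univ, true_implies]
    rcases fin2_cases (pa 0) with h0 | h0 <;> rw [h0] <;>
      simp only [show ((0:Fin 2) = 1) = False from by simp,
        show ((1:Fin 2) = 0) = False from by simp, false_and, if_false,
        add_zero, zero_add, eq_self_iff_true, true_and]
    · refine boole_helper _ _ _ ?_ _
      rw [funext_iff, forall_fin_succ']
      simp only [Fin.cons_zero, Fin.cons_succ, add_zero]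
      constructor
      · rintro ⟨⟨h1, h2⟩, h3⟩
        exact ⟨h1.symm, fun i =>
          ⟨(h3 i).trans ((fin2_add_eq_zero _ _).mp (h2 i)).symm, h3 i⟩⟩
      · rintro ⟨h1, h2⟩
        exact ⟨⟨h1.symm, fun i =>
          (fin2_add_eq_zero _ _).mpr (((h2 i).1.symm).trans (h2 i).2)⟩, fun i => (h2 i).2⟩
    · refine boole_helper _ _ _ ?_ _
      rw [funext_iff, forall_fin_succ']
      simp only [Fin.cons_zero, Fin.cons_succ, add_zero]
      constructor
      · rintro ⟨⟨h1, h2⟩, h3⟩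
        refine ⟨h1.symm, fun i => ?_⟩
        have hb := (fin2_add_eq_one _ _).mp (h2 i)
        have ha := (fin2_add_one _ _).mp (h3 i)
        exact ⟨ha.trans hb.symm, ha⟩
      · rintro ⟨h1, h2⟩
        exact ⟨⟨h1.symm, fun i =>
          (fin2_add_eq_one _ _).mpr (((h2 i).1.symm).trans (h2 i).2)⟩,
          fun i => (fin2_add_one _ _).mpr (h2 i).2⟩
  have hRHS : ((Real.sqrt 2 : ℂ))⁻¹ ^ (n + 1) *
            ∑ z : Fin (n + 1) → Fin 2,
              (-1 : ℂ) ^ (∑ i, (β i).val * (z i).val) *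
                (bellBasisAmp (∑ i, z i) 0 (pa 0) (pb 0) *
                  ∏ i : Fin (n + 1), bellBasisAmp (z i) 0 (pa i.succ) (pb i.succ)) = T := by
    have hsummand : ∀ z : Fin (n+1) → Fin 2,
        (-1:ℂ) ^ (∑ i, (β i).val * (z i).val) *
          (bellBasisAmp (∑ i, z i) 0 (pa 0) (pb 0) *
            ∏ i : Fin (n+1), bellBasisAmp (z i) 0 (pa i.succ) (pb i.succ))
        = ((if pa 0 = pb 0 then (1:ℂ) else 0) * ((Real.sqrt 2 : ℂ))⁻¹) *
            ∏ i : Fin (n+1), ((-1:ℂ)) ^ ((β i).val * (z i).val) * (-1) ^ ((z i).val * (pa 0).val) *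
              (if pa i.succ = pb i.succ then (-1:ℂ) ^ ((z i).val * (pa i.succ).val) * ((Real.sqrt 2 : ℂ))⁻¹ else 0) := by
      intro z
      simp only [bellBasisAmp, add_zero]
      rw [← Finset.prod_pow_eq_pow_sum, neg_one_pow_sum_val]
      conv_rhs => rw [Finset.prod_mul_distrib, Finset.prod_mul_distrib]
      split_ifs with h
      · ring
      · ring
    rw [Finset.sum_congr rfl (fun z _ => hsummand z), ← Finset.mul_sum]
    have hswap : (∑ z : Fin (n+1) → Fin 2, ∏ i : Fin (n+1),
        ((-1:ℂ)) ^ ((β i).val * (z i).val) * (-1) ^ ((z i).val * (pa 0).val) *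
          (if pa i.succ = pb i.succ then (-1:ℂ) ^ ((z i).val * (pa i.succ).val) * ((Real.sqrt 2 : ℂ))⁻¹ else 0))
        = ∏ i : Fin (n+1), ∑ x : Fin 2,
            ((-1:ℂ)) ^ ((β i).val * x.val) * (-1) ^ (x.val * (pa 0).val) *
              (if pa i.succ = pb i.succ then (-1:ℂ) ^ (x.val * (pa i.succ).val) * ((Real.sqrt 2 : ℂ))⁻¹ else 0) :=
      (Fintype.prod_sum (fun (i : Fin (n+1)) (x : Fin 2) =>
        ((-1:ℂ)) ^ ((β i).val * x.val) * (-1) ^ (x.val * (pa 0).val) *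
          (if pa i.succ = pb i.succ then (-1:ℂ) ^ (x.val * (pa i.succ).val) * ((Real.sqrt 2 : ℂ))⁻¹ else 0))).symm
    rw [hswap]
    rw [Finset.prod_congr rfl (fun i _ => key_sum (β i) (pa 0) (pa i.succ) (pb i.succ))]
    have hstep : ∀ i : Fin (n+1),
        (if pa i.succ = pb i.succ ∧ pa i.succ = β i + pa 0 then 2 * ((Real.sqrt 2 : ℂ))⁻¹ else 0)
        = (if pa i.succ = pb i.succ ∧ pa i.succ = β i + pa 0 then (1:ℂ) else 0) *
            (2 * ((Real.sqrt 2 : ℂ))⁻¹) := by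
      intro i; split <;> simp
    rw [Finset.prod_congr rfl (fun i _ => hstep i), Finset.prod_mul_distrib,
      Finset.prod_const, Finset.card_univ, Fintype.card_fin, Finset.prod_boole]
    simp only [Finset.mem_univ, true_implies]
    have hre : ((Real.sqrt 2:ℂ))⁻¹ ^ (n+1) *
        (((if pa 0 = pb 0 then (1:ℂ) else 0) * ((Real.sqrt 2:ℂ))⁻¹) *
          ((if ∀ i : Fin (n+1), pa i.succ = pb i.succ ∧ pa i.succ = β i + pa 0 then (1:ℂ) else 0) *
            (2 * ((Real.sqrt 2:ℂ))⁻¹) ^ (n+1)))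
        = (((Real.sqrt 2:ℂ))⁻¹ * (2 * ((Real.sqrt 2:ℂ))⁻¹)) ^ (n+1) *
            (((Real.sqrt 2:ℂ))⁻¹ * ((if pa 0 = pb 0 then (1:ℂ) else 0) *
              (if ∀ i : Fin (n+1), pa i.succ = pb i.succ ∧ pa i.succ = β i + pa 0 then (1:ℂ) else 0))) := by
      rw [mul_pow]; ring
    rw [hre, sqrt2_fact, one_pow, one_mul, hT]
    congr 1
    by_cases hP : pa 0 = pb 0 <;>
      by_cases hQ : ∀ i : Fin (n+1), pa i.succ = pb i.succ ∧ pa i.succ = β i + pa 0 <;>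
        simp [hP, hQ]
  rw [hLHS, ← hRHS]
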